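/- arXiv:0801.0398 — 2 statements merged into one kernel-verified Lean document; each statement's English description precedes it below -/
import Mathlib

section
/- Ψ_{2,2} = Φ_{2,2}: every 4×4 nonnegative matrix satisfying the defining linear equations of Φ_{2,2} is a convex combination of the four matrices P ⊗ Q with P, Q ∈ 𝒫_2. -/
open Matrix Kronecker Finset

lemma permMatrix_apply {n : ℕ} (σ : Equiv.Perm (Fin n)) (i j : Fin n) :
    σ.permMatrix ℝ i j = if σ i = j then 1 else 0 := by
  simp [Equiv.Perm.permMatrix, PEquiv.toMatrix_apply, Equiv.toPEquiv_apply]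

lemma sum_ite_perm_right {n : ℕ} (σ : Equiv.Perm (Fin n)) (i : Fin n) :
    ∑ j : Fin n, (if σ i = j then (1:ℝ) else 0) = 1 := by
  simp [Finset.sum_ite_eq]

lemma sum_ite_perm_left {n : ℕ} (σ : Equiv.Perm (Fin n)) (i : Fin n) :
    ∑ j : Fin n, (if σ j = i then (1:ℝ) else 0) = 1 := by
  simp only [Equiv.apply_eq_iff_eq_symm_apply, Finset.sum_ite_eq', Finset.mem_univ, if_true]

/-- The polytope `Φ_{m,n}`: nonnegative matrices (indexed by pairs) that are
doubly stochastic and satisfy the block row/column sum conditions. -/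
def Phi (m n : ℕ) [NeZero m] [NeZero n] : Set (Matrix (Fin m × Fin n) (Fin m × Fin n) ℝ) :=
  {C | (∀ p q, 0 ≤ C p q) ∧
    (∀ p, ∑ q, C p q = 1) ∧ (∀ p, ∑ q, C q p = 1) ∧
    (∀ i : Fin m, i ≠ 0 → ∀ k l : Fin n,
      (∑ j, C (i, k) (j, l) = ∑ j, C (0, k) (j, l)) ∧
      (∑ j, C (j, k) (i, l) = ∑ j, C (0, k) (j, l))) ∧
    (∀ k : Fin n, k ≠ 0 → ∀ i j : Fin m,
      (∑ l, C (i, k) (j, l) = ∑ l, C (i, 0) (j, l)) ∧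
      (∑ l, C (i, l) (j, k) = ∑ l, C (i, 0) (j, l)))}

/-- `Ψ_{m,n}`: the convex hull of Kronecker products of permutation matrices. -/
def Psi (m n : ℕ) : Set (Matrix (Fin m × Fin n) (Fin m × Fin n) ℝ) :=
  convexHull ℝ {C | ∃ σ : Equiv.Perm (Fin m), ∃ τ : Equiv.Perm (Fin n),
    C = (σ.permMatrix ℝ) ⊗ₖ (τ.permMatrix ℝ)}



lemma kron_mem_phi (σ τ : Equiv.Perm (Fin 2)) :
    (σ.permMatrix ℝ) ⊗ₖ (τ.permMatrix ℝ) ∈ Phi 2 2 := by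
  refine ⟨?_, ?_, ?_, ?_, ?_⟩
  · rintro ⟨i,k⟩ ⟨j,l⟩
    simp only [kroneckerMap_apply, permMatrix_apply]
    split_ifs <;> norm_num
  · rintro ⟨i,k⟩
    rw [Fintype.sum_prod_type]
    simp only [kroneckerMap_apply, permMatrix_apply]
    rw [← Finset.sum_mul_sum, sum_ite_perm_right, sum_ite_perm_right, one_mul]
  · rintro ⟨j,l⟩
    rw [Fintype.sum_prod_type]
    simp only [kroneckerMap_apply, permMatrix_apply]
    rw [← Finset.sum_mul_sum, sum_ite_perm_left, sum_ite_perm_left, one_mul]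
  · intro i hi k l
    simp only [kroneckerMap_apply, permMatrix_apply]
    constructor
    · rw [← Finset.sum_mul, ← Finset.sum_mul, sum_ite_perm_right, sum_ite_perm_right]
    · rw [← Finset.sum_mul, ← Finset.sum_mul, sum_ite_perm_left, sum_ite_perm_right]
  · intro k hk i j
    simp only [kroneckerMap_apply, permMatrix_apply]
    constructor
    · rw [← Finset.mul_sum, ← Finset.mul_sum, sum_ite_perm_right, sum_ite_perm_right]
    · rw [← Finset.mul_sum, ← Finset.mul_sum, sum_ite_perm_left, sum_ite_perm_right]

lemma phi_convex : Convex ℝ (Phi 2 2) := by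
  intro C hC D hD a b ha hb hab
  obtain ⟨hC0, hCr, hCc, hCb1, hCb2⟩ := hC
  obtain ⟨hD0, hDr, hDc, hDb1, hDb2⟩ := hD
  refine ⟨?_, ?_, ?_, ?_, ?_⟩
  · intro p q
    simp only [Matrix.add_apply, Matrix.smul_apply, smul_eq_mul]
    have := hC0 p q; have := hD0 p q; nlinarith
  · intro p
    simp only [Matrix.add_apply, Matrix.smul_apply, smul_eq_mul]
    rw [Finset.sum_add_distrib, ← Finset.mul_sum, ← Finset.mul_sum, hCr p, hDr p]
    ring_nf; linarith
  · intro p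
    simp only [Matrix.add_apply, Matrix.smul_apply, smul_eq_mul]
    rw [Finset.sum_add_distrib, ← Finset.mul_sum, ← Finset.mul_sum, hCc p, hDc p]
    ring_nf; linarith
  · intro i hi k l
    constructor <;>
    · simp only [Matrix.add_apply, Matrix.smul_apply, smul_eq_mul]
      rw [Finset.sum_add_distrib, Finset.sum_add_distrib, ← Finset.mul_sum, ← Finset.mul_sum,
        ← Finset.mul_sum, ← Finset.mul_sum]
      first
      | rw [(hCb1 i hi k l).1, (hDb1 i hi k l).1]
      | rw [(hCb1 i hi k l).2, (hDb1 i hi k l).2]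
  · intro k hk i j
    constructor <;>
    · simp only [Matrix.add_apply, Matrix.smul_apply, smul_eq_mul]
      rw [Finset.sum_add_distrib, Finset.sum_add_distrib, ← Finset.mul_sum, ← Finset.mul_sum,
        ← Finset.mul_sum, ← Finset.mul_sum]
      first
      | rw [(hCb2 k hk i j).1, (hDb2 k hk i j).1]
      | rw [(hCb2 k hk i j).2, (hDb2 k hk i j).2]

/-- `Ψ_{2,2} = Φ_{2,2}`. -/
theorem psi_eq_phi_two_two : Psi 2 2 = Phi 2 2 := by
  apply Set.Subset.antisymm
  · exact convexHull_min (by rintro C ⟨σ, τ, rfl⟩; exact kron_mem_phi σ τ) phi_convex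
  · intro C hC
    obtain ⟨h0, hr, hc, hb1, hb2⟩ := hC
    set S : Equiv.Perm (Fin 2) := Equiv.swap 0 1 with hS
    set w : Fin 4 → ℝ := ![C (0,0) (0,0), C (0,0) (0,1), C (0,0) (1,0), C (0,0) (1,1)] with hw
    set z : Fin 4 → Matrix (Fin 2 × Fin 2) (Fin 2 × Fin 2) ℝ :=
      ![((1 : Equiv.Perm (Fin 2)).permMatrix ℝ) ⊗ₖ ((1 : Equiv.Perm (Fin 2)).permMatrix ℝ),
        ((1 : Equiv.Perm (Fin 2)).permMatrix ℝ) ⊗ₖ (S.permMatrix ℝ),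
        (S.permMatrix ℝ) ⊗ₖ ((1 : Equiv.Perm (Fin 2)).permMatrix ℝ),
        (S.permMatrix ℝ) ⊗ₖ (S.permMatrix ℝ)] with hz
    have hsum : ∑ i, w i = 1 := by
      have := hr (0,0)
      rw [Fintype.sum_prod_type] at this
      simp only [Fin.sum_univ_two] at this
      rw [Fin.sum_univ_four]
      show C (0,0) (0,0) + C (0,0) (0,1) + C (0,0) (1,0) + C (0,0) (1,1) = 1
      linarith
    have hmem : Finset.univ.centerMass w z ∈ Psi 2 2 := by
      apply Finset.centerMass_mem_convexHull
      · intro i _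
        fin_cases i <;> exact h0 _ _
      · rw [hsum]; norm_num
      · intro i _
        fin_cases i
        exacts [⟨1, 1, rfl⟩, ⟨1, S, rfl⟩, ⟨S, 1, rfl⟩, ⟨S, S, rfl⟩]
    rw [Finset.centerMass_eq_of_sum_1 _ _ hsum] at hmem
    convert hmem using 1
    -- Now show C = ∑ i, w i • z i
    have er0 := hr (0,0); have er1 := hr (0,1); have er2 := hr (1,0); have er3 := hr (1,1)
    have ec0 := hc (0,0); have ec1 := hc (0,1); have ec2 := hc (1,0); have ec3 := hc (1,1)
    have eb00 := hb1 1 (by decide) 0 0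
    have eb01 := hb1 1 (by decide) 0 1
    have eb10 := hb1 1 (by decide) 1 0
    have eb11 := hb1 1 (by decide) 1 1
    have fb00 := hb2 1 (by decide) 0 0
    have fb01 := hb2 1 (by decide) 0 1
    have fb10 := hb2 1 (by decide) 1 0
    have fb11 := hb2 1 (by decide) 1 1
    simp only [Fintype.sum_prod_type, Fin.sum_univ_two] at er0 er1 er2 er3 ec0 ec1 ec2 ec3
    obtain ⟨eb00a, eb00b⟩ := eb00
    obtain ⟨eb01a, eb01b⟩ := eb01
    obtain ⟨eb10a, eb10b⟩ := eb10
    obtain ⟨eb11a, eb11b⟩ := eb11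
    obtain ⟨fb00a, fb00b⟩ := fb00
    obtain ⟨fb01a, fb01b⟩ := fb01
    obtain ⟨fb10a, fb10b⟩ := fb10
    obtain ⟨fb11a, fb11b⟩ := fb11
    simp only [Fin.sum_univ_two] at eb00a eb00b eb01a eb01b eb10a eb10b eb11a eb11b fb00a fb00b fb01a fb01b fb10a fb10b fb11a fb11b
    ext ⟨i, k⟩ ⟨j, l⟩
    fin_cases i <;> fin_cases k <;> fin_cases j <;> fin_cases l <;>
      norm_num [Matrix.sum_apply, Matrix.smul_apply, Fin.sum_univ_four, hw, hz,
        kroneckerMap_apply, permMatrix_apply, hS, Equiv.swap_apply_def, Equiv.toPEquiv_apply, Equiv.Perm.one_apply, Option.some.injEq, Matrix.cons_val_two, Matrix.cons_val_three, Matrix.vecHead, Matrix.vecTail,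
        -Prod.mk_zero_zero, -Prod.mk_one_one] <;> linarith
end

section
/- Under the hypotheses of the linear-programming characterization of permutational similarity (conditions (a) and (b) hold for A, B and admissible t), every extreme point of the compact convex set Ψ_{n,n}(A,B) = { Z ∈ Ψ_{n,n} : Z·vec(A+tI) = vec(B+tI) } is of the form P ⊗ P with P a permutation matrix satisfying PAPᵀ = B. -/
open Matrix Kronecker Finset

/-- `vec`: stacking the columns of a square matrix. -/
def vec (n : ℕ) (M : Matrix (Fin n) (Fin n) ℝ) : Fin n × Fin n → ℝ :=
  fun p => M p.2 p.1

lemma kron_mulVec {n : ℕ} (σ τ : Equiv.Perm (Fin n)) (v : Fin n × Fin n → ℝ)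
    (p : Fin n × Fin n) :
    ((σ.permMatrix ℝ ⊗ₖ τ.permMatrix ℝ).mulVec v) p = v (σ p.1, τ p.2) := by
  obtain ⟨i, j⟩ := p
  simp [Matrix.mulVec, dotProduct, Equiv.Perm.permMatrix, PEquiv.toMatrix_apply,
    Equiv.toPEquiv_apply, Fintype.sum_prod_type, kroneckerMap_apply, ite_and, mul_ite,
    Finset.sum_ite_eq, Finset.sum_ite_eq']

lemma perm_conj_apply {n : ℕ} (σ : Equiv.Perm (Fin n)) (A : Matrix (Fin n) (Fin n) ℝ)
    (i j : Fin n) : (σ.permMatrix ℝ * A * (σ.permMatrix ℝ)ᵀ) i j = A (σ i) (σ j) := by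
  rw [Equiv.Perm.permMatrix, ← PEquiv.toMatrix_symm, ← Equiv.toPEquiv_symm,
    PEquiv.toMatrix_toPEquiv_mul, PEquiv.mul_toMatrix_toPEquiv]
  simp

lemma sum_smul_mulVec {n : ℕ} {ι : Type} [Fintype ι] (w : ι → ℝ)
    (z : ι → Matrix (Fin n × Fin n) (Fin n × Fin n) ℝ) (v : Fin n × Fin n → ℝ) :
    (∑ k, w k • z k).mulVec v = ∑ k, w k • (z k).mulVec v := by
  ext p
  simp only [Matrix.mulVec, dotProduct, Finset.sum_apply, Matrix.smul_apply,
    Matrix.sum_apply, smul_eq_mul, Pi.smul_apply, Finset.sum_mul, Finset.mul_sum]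
  rw [Finset.sum_comm]
  exact Finset.sum_congr rfl fun k _ => Finset.sum_congr rfl fun q _ => by ring

lemma multiset_sum_fun {α : Type} (s : Finset α) (f g : α → ℝ)
    (h : s.val.map f = s.val.map g) (F : ℝ → ℝ) :
    ∑ x ∈ s, F (f x) = ∑ x ∈ s, F (g x) := by
  rw [Finset.sum_eq_multiset_sum, Finset.sum_eq_multiset_sum]
  have e1 : (Multiset.map (fun x => F (f x)) s.val) = (s.val.map f).map F := by
    rw [Multiset.map_map]; rfl
  have e2 : (Multiset.map (fun x => F (g x)) s.val) = (s.val.map g).map F := by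
    rw [Multiset.map_map]; rfl
  rw [e1, e2, h]

lemma diag_off_split {n : ℕ} (g : Fin n × Fin n → ℝ) :
    ∑ p : Fin n × Fin n, g p = (∑ i, g (i, i)) +
      ∑ p ∈ Finset.univ.filter (fun p : Fin n × Fin n => p.1 ≠ p.2), g p := by
  classical
  rw [← Finset.sum_filter_add_sum_filter_not Finset.univ (fun p : Fin n × Fin n => p.1 = p.2) g]
  congr 1
  rw [Finset.sum_filter, Fintype.sum_prod_type]
  simp

lemma sumsq_reindex {n : ℕ} (σ τ : Equiv.Perm (Fin n)) (M : Matrix (Fin n) (Fin n) ℝ) :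
    ∑ p : Fin n × Fin n, (M (τ p.2) (σ p.1)) ^ 2 = ∑ p : Fin n × Fin n, (M p.1 p.2) ^ 2 := by
  have := Equiv.sum_comp ((Equiv.prodComm (Fin n) (Fin n)).trans (Equiv.prodCongr τ σ))
    (fun p : Fin n × Fin n => (M p.1 p.2) ^ 2)
  simpa using this

lemma square_lemma {α ι : Type} [Fintype α] [Fintype ι] (w : ι → ℝ)
    (hw0 : ∀ k, 0 ≤ w k) (hw1 : ∑ k, w k = 1) (f : ι → α → ℝ) (c : α → ℝ)
    (hsq : ∀ k, w k ≠ 0 → ∑ p, (f k p) ^ 2 = ∑ p, (c p) ^ 2)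
    (hc : ∑ k, w k • f k = c) : ∀ k, w k ≠ 0 → f k = c := by
  have hcp : ∀ p, ∑ k, w k * f k p = c p := by
    intro p
    have := congrFun hc p
    simpa [Finset.sum_apply] using this
  set R := ∑ p, (c p) ^ 2 with hR
  have hS1 : ∑ k, ∑ p, w k * (f k p) ^ 2 = R := by
    have h1 : ∀ k ∈ Finset.univ (α := ι), ∑ p, w k * (f k p) ^ 2 = w k * R := by
      intro k _
      rw [← Finset.mul_sum]
      by_cases h : w k = 0
      · simp [h]
      · rw [hsq k h]
    rw [Finset.sum_congr rfl h1, ← Finset.sum_mul, hw1, one_mul]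
  have hS2 : ∑ k, ∑ p, (w k * f k p) * c p = R := by
    rw [Finset.sum_comm]
    have h1 : ∀ p ∈ Finset.univ (α := α), ∑ k, (w k * f k p) * c p = (c p) ^ 2 := by
      intro p _
      rw [← Finset.sum_mul, hcp p]; ring
    rw [Finset.sum_congr rfl h1]
  have hS3 : ∑ k, ∑ p, w k * (c p) ^ 2 = R := by
    have h1 : ∀ k ∈ Finset.univ (α := ι), ∑ p, w k * (c p) ^ 2 = w k * R := by
      intro k _; rw [← Finset.mul_sum]
    rw [Finset.sum_congr rfl h1, ← Finset.sum_mul, hw1, one_mul]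
  have key : ∑ k, w k * (∑ p, (f k p - c p) ^ 2) = 0 := by
    have e1 : ∀ k ∈ Finset.univ (α := ι), w k * (∑ p, (f k p - c p) ^ 2)
        = ∑ p, (w k * (f k p) ^ 2 - 2 * ((w k * f k p) * c p) + w k * (c p) ^ 2) := by
      intro k _
      rw [Finset.mul_sum]
      exact Finset.sum_congr rfl fun p _ => by ring
    rw [Finset.sum_congr rfl e1]
    have : ∀ k ∈ Finset.univ (α := ι),
        ∑ p, (w k * (f k p) ^ 2 - 2 * ((w k * f k p) * c p) + w k * (c p) ^ 2)
        = (∑ p, w k * (f k p) ^ 2) - 2 * (∑ p, (w k * f k p) * c p) + ∑ p, w k * (c p) ^ 2 := by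
      intro k _
      rw [Finset.sum_add_distrib, Finset.sum_sub_distrib]
      congr 1
      congr 1
      rw [← Finset.mul_sum]
    rw [Finset.sum_congr rfl this, Finset.sum_add_distrib, Finset.sum_sub_distrib, hS1, hS3,
      ← Finset.mul_sum, hS2]
    ring
  have nonneg : ∀ k ∈ Finset.univ (α := ι), 0 ≤ w k * (∑ p, (f k p - c p) ^ 2) := fun k _ =>
    mul_nonneg (hw0 k) (Finset.sum_nonneg fun p _ => sq_nonneg _)
  have each := (Finset.sum_eq_zero_iff_of_nonneg nonneg).1 key
  intro k hk
  have hsum0 : ∑ p, (f k p - c p) ^ 2 = 0 := by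
    rcases mul_eq_zero.1 (each k (Finset.mem_univ k)) with h | h
    · exact absurd h hk
    · exact h
  funext p
  have h0 := (Finset.sum_eq_zero_iff_of_nonneg
    (fun p _ => sq_nonneg (f k p - c p))).1 hsum0 p (Finset.mem_univ p)
  have := pow_eq_zero_iff (n := 2) (by norm_num) |>.1 h0
  linarith

/-- Under the conditions of the LP characterization of permutational similarity, every
extreme point of `Ψ_{n,n}(A,B) = {Z ∈ Ψ_{n,n} : Z·vec(A+tI) = vec(B+tI)}` is of the
form `P ⊗ P` with `P A Pᵀ = B`. -/
theorem extremePoints_psi_AB (n : ℕ) (A B : Matrix (Fin n) (Fin n) ℝ) (t : ℝ)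
    (hdiag : (Finset.univ.val.map fun i : Fin n => A i i) =
             (Finset.univ.val.map fun i : Fin n => B i i))
    (hoff : ((Finset.univ.filter fun p : Fin n × Fin n => p.1 ≠ p.2).val.map
               fun p => A p.1 p.2) =
            ((Finset.univ.filter fun p : Fin n × Fin n => p.1 ≠ p.2).val.map
               fun p => B p.1 p.2))
    (ht : ∀ i j k : Fin n, i ≠ j → t ≠ A i j - A k k) :
    ∀ Z ∈ Set.extremePoints ℝ
        {Z ∈ Psi n n | Z.mulVec (vec n (A + t • 1)) = vec n (B + t • 1)},
      ∃ P : Equiv.Perm (Fin n),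
        Z = (P.permMatrix ℝ) ⊗ₖ (P.permMatrix ℝ) ∧
        P.permMatrix ℝ * A * (P.permMatrix ℝ)ᵀ = B := by
  classical
  set M : Matrix (Fin n) (Fin n) ℝ := A + t • 1 with hMdef
  set N : Matrix (Fin n) (Fin n) ℝ := B + t • 1 with hNdef
  have hMe : ∀ i j : Fin n, M i j = A i j + (if i = j then t else 0) := by
    intro i j
    simp [hMdef, Matrix.add_apply, Matrix.smul_apply, Matrix.one_apply, mul_ite]
  have hNe : ∀ i j : Fin n, N i j = B i j + (if i = j then t else 0) := by
    intro i j
    simp [hNdef, Matrix.add_apply, Matrix.smul_apply, Matrix.one_apply, mul_ite]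
  set G : Set (Matrix (Fin n × Fin n) (Fin n × Fin n) ℝ) :=
    {C | ∃ P : Equiv.Perm (Fin n), C = (P.permMatrix ℝ) ⊗ₖ (P.permMatrix ℝ) ∧
      P.permMatrix ℝ * A * (P.permMatrix ℝ)ᵀ = B} with hGdef
  set S : Set (Matrix (Fin n × Fin n) (Fin n × Fin n) ℝ) :=
    {Z ∈ Psi n n | Z.mulVec (vec n M) = vec n N} with hSdef
  -- sum of squares of M equals that of N
  have hsumsq : ∑ p : Fin n × Fin n, (M p.1 p.2) ^ 2 = ∑ p : Fin n × Fin n, (N p.1 p.2) ^ 2 := by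
    rw [diag_off_split, diag_off_split]
    congr 1
    · have h1 : ∀ i ∈ Finset.univ (α := Fin n), (M i i) ^ 2 = (A i i + t) ^ 2 := by
        intro i _; rw [hMe]; simp
      have h2 : ∀ i ∈ Finset.univ (α := Fin n), (N i i) ^ 2 = (B i i + t) ^ 2 := by
        intro i _; rw [hNe]; simp
      rw [Finset.sum_congr rfl h1, Finset.sum_congr rfl h2]
      exact multiset_sum_fun _ _ _ hdiag (fun x => (x + t) ^ 2)
    · have h1 : ∀ p ∈ Finset.univ.filter (fun p : Fin n × Fin n => p.1 ≠ p.2),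
          (M p.1 p.2) ^ 2 = (A p.1 p.2) ^ 2 := by
        intro p hp
        rw [hMe, if_neg (Finset.mem_filter.1 hp).2, add_zero]
      have h2 : ∀ p ∈ Finset.univ.filter (fun p : Fin n × Fin n => p.1 ≠ p.2),
          (N p.1 p.2) ^ 2 = (B p.1 p.2) ^ 2 := by
        intro p hp
        rw [hNe, if_neg (Finset.mem_filter.1 hp).2, add_zero]
      rw [Finset.sum_congr rfl h1, Finset.sum_congr rfl h2]
      exact multiset_sum_fun _ _ _ hoff (fun x => x ^ 2)
  -- vertices satisfying the constraint are good
  have vertexG : ∀ σ τ : Equiv.Perm (Fin n),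
      (σ.permMatrix ℝ ⊗ₖ τ.permMatrix ℝ).mulVec (vec n M) = vec n N →
      ∃ P : Equiv.Perm (Fin n),
        σ.permMatrix ℝ ⊗ₖ τ.permMatrix ℝ = P.permMatrix ℝ ⊗ₖ P.permMatrix ℝ ∧
        P.permMatrix ℝ * A * (P.permMatrix ℝ)ᵀ = B := by
    intro σ τ h
    have hpt : ∀ i j : Fin n, M (τ j) (σ i) = N j i := by
      intro i j
      have := congrFun h (i, j)
      rwa [kron_mulVec] at this
    have hBdiag : ∀ i : Fin n, ∃ k, A k k = B i i := by
      intro i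
      have hmem : B i i ∈ Multiset.map (fun i : Fin n => B i i) Finset.univ.val :=
        Multiset.mem_map_of_mem _ (Finset.mem_univ i)
      rw [← hdiag] at hmem
      obtain ⟨k, _, hk⟩ := Multiset.mem_map.1 hmem
      exact ⟨k, hk⟩
    have hpoint : ∀ i, σ i = τ i := by
      intro i
      by_contra hne
      have h1 := hpt i i
      rw [hMe, hNe, if_neg (fun hc : τ i = σ i => hne hc.symm), if_pos rfl, add_zero] at h1
      obtain ⟨k, hk⟩ := hBdiag i
      exact ht (τ i) (σ i) k (fun hc => hne hc.symm) (by linarith [hk])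
    obtain rfl : σ = τ := Equiv.ext hpoint
    have hAB : ∀ i j : Fin n, A (σ j) (σ i) = B j i := by
      intro i j
      have h1 := hpt i j
      rw [hMe, hNe] at h1
      by_cases hij : j = i
      · subst hij; simpa using h1
      · rw [if_neg (fun hc : σ j = σ i => hij (σ.injective hc)), if_neg hij] at h1
        simpa using h1
    refine ⟨σ, rfl, ?_⟩
    ext i j
    rw [perm_conj_apply]
    exact hAB j i
  -- G ⊆ S
  have hGS : G ⊆ S := by
    rintro C ⟨P, rfl, hP⟩
    have hAB : ∀ i j : Fin n, A (P i) (P j) = B i j := by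
      intro i j
      have := congrFun (congrFun hP i) j
      rwa [perm_conj_apply] at this
    refine ⟨subset_convexHull ℝ _ ⟨P, P, rfl⟩, ?_⟩
    funext p
    rw [kron_mulVec]
    show M (P p.2) (P p.1) = N p.2 p.1
    rw [hMe, hNe, hAB]
    congr 1
    by_cases h : p.2 = p.1
    · rw [if_pos (by rw [h]), if_pos h]
    · rw [if_neg (fun hc => h (P.injective hc)), if_neg h]
  -- S convex
  have hconvS : Convex ℝ S := by
    have h1 : Convex ℝ (Psi n n) := convex_convexHull ℝ _
    have h2 : Convex ℝ {Z : Matrix (Fin n × Fin n) (Fin n × Fin n) ℝ |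
        Z.mulVec (vec n M) = vec n N} := by
      intro Z₁ h₁ Z₂ h₂ a b ha hb hab
      simp only [Set.mem_setOf_eq] at h₁ h₂ ⊢
      rw [Matrix.add_mulVec, Matrix.smul_mulVec, Matrix.smul_mulVec, h₁, h₂,
        ← add_smul, hab, one_smul]
    exact h1.inter h2
  -- S ⊆ convexHull G
  have hSG : S ⊆ convexHull ℝ G := by
    rintro W ⟨hWP, hWv⟩
    rw [Psi, mem_convexHull_iff_exists_fintype] at hWP
    obtain ⟨ι, _inst, w, z, hw0, hw1, hz, hsum⟩ := hWP
    choose σf τf hzeq using hz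
    have hvec : ∀ k, w k ≠ 0 → (z k).mulVec (vec n M) = vec n N := by
      apply square_lemma w hw0 hw1 (fun k => (z k).mulVec (vec n M)) (vec n N)
      · intro k hk
        have e1 : ∀ p : Fin n × Fin n,
            ((z k).mulVec (vec n M)) p = M (τf k p.2) (σf k p.1) := by
          intro p
          rw [hzeq k, kron_mulVec]
          rfl
        calc ∑ p : Fin n × Fin n, (((z k).mulVec (vec n M)) p) ^ 2
            = ∑ p : Fin n × Fin n, (M (τf k p.2) (σf k p.1)) ^ 2 :=
              Finset.sum_congr rfl fun p _ => by rw [e1]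
          _ = ∑ p : Fin n × Fin n, (M p.1 p.2) ^ 2 := sumsq_reindex _ _ _
          _ = ∑ p : Fin n × Fin n, (N p.1 p.2) ^ 2 := hsumsq
          _ = ∑ p : Fin n × Fin n, (vec n N p) ^ 2 := by
              have := Equiv.sum_comp (Equiv.prodComm (Fin n) (Fin n))
                (fun p : Fin n × Fin n => (vec n N p) ^ 2)
              rw [← this]
              exact Finset.sum_congr rfl fun p _ => rfl
      · rw [← sum_smul_mulVec, hsum, hWv]
    obtain ⟨k₀, -, hk₀⟩ : ∃ k ∈ Finset.univ (α := ι), w k ≠ 0 := by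
      apply Finset.exists_ne_zero_of_sum_ne_zero
      rw [hw1]; norm_num
    have hzG : ∀ k, w k ≠ 0 → z k ∈ G := by
      intro k hk
      obtain ⟨P, hPeq, hPB⟩ := vertexG (σf k) (τf k) (by rw [← hzeq k]; exact hvec k hk)
      exact ⟨P, by rw [hzeq k, hPeq], hPB⟩
    apply mem_convexHull_of_exists_fintype w
      (fun k => if w k = 0 then z k₀ else z k) hw0 hw1
    · intro k
      by_cases h : w k = 0
      · simp only [h, if_pos rfl]
        exact hzG k₀ hk₀
      · simp only [if_neg h]
        exact hzG k h
    · rw [← hsum]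
      apply Finset.sum_congr rfl
      intro k _
      by_cases h : w k = 0
      · simp [h]
      · rw [if_neg h]
  have hSeq : S = convexHull ℝ G := Set.Subset.antisymm hSG (convexHull_min hGS hconvS)
  intro Z hZ
  rw [hSeq] at hZ
  exact (extremePoints_convexHull_subset hZ : Z ∈ G)
end
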